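/- For every real number θ such that θ/π is not an integer, the symmetric partial sums ∑_{j=-N}^{N} 2/(θ + (2j+1)π) converge as N → ∞, and their limit equals (cos θ − 1)/sin θ. -/

import Mathlib

open Real Filter Topology


open intervalIntegral in
lemma exp_int_helper (a : ℝ) (ha : (a:ℂ) ≠ 0) :
    (∫ t in (-π)..π, Complex.exp ((Complex.I*(a:ℂ)) * t)) = 2 * Complex.sin ((a:ℂ)*(π:ℂ)) / a := by
  have hc : (Complex.I*(a:ℂ)) ≠ 0 := by simp [Complex.I_ne_zero, ha]
  rw [integral_exp_mul_complex hc, Complex.sin]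
  rw [show Complex.I * (a:ℂ) * ((-π:ℝ):ℂ) = -(((a:ℂ)*(π:ℂ))*Complex.I) by push_cast; ring,
      show Complex.I * (a:ℂ) * ((π:ℝ):ℂ) = ((a:ℂ)*(π:ℂ))*Complex.I by ring]
  field_simp [Complex.I_ne_zero]
  linear_combination (Complex.exp (((a:ℂ)*(π:ℂ)*Complex.I)) - Complex.exp (-((a:ℂ)*(π:ℂ)*Complex.I))) * Complex.I_sq

open intervalIntegral in
lemma cos_integral (z : ℝ) (n : ℤ) (hzn : (z:ℝ) ≠ n) (hzn' : z ≠ -n) :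
    (∫ t in (-π)..π, Complex.exp (-(n*t)*Complex.I) * Complex.cos (z*t)) =
      Complex.sin (((z:ℂ)-(n:ℂ))*(π:ℂ))/((z:ℂ)-(n:ℂ)) + Complex.sin (((z:ℂ)+(n:ℂ))*(π:ℂ))/((z:ℂ)+(n:ℂ)) := by
  have h1 : ((z:ℂ) - (n:ℂ)) ≠ 0 := sub_ne_zero.2 (by exact_mod_cast hzn)
  have h2 : ((z:ℂ) + (n:ℂ)) ≠ 0 := by
    intro hc
    apply hzn'
    have : (z:ℂ) = -(n:ℂ) := by linear_combination hc
    exact_mod_cast this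
  have key : ∀ t : ℝ, Complex.exp (-(n*t)*Complex.I) * Complex.cos (z*t)
      = Complex.exp ((Complex.I*((z-n:ℝ):ℂ)) * t)/2 + Complex.exp ((Complex.I*((-(z+n):ℝ):ℂ)) * t)/2 := by
    intro t
    rw [Complex.cos]
    rw [show ((z:ℝ)*t : ℂ) * Complex.I = (Complex.I*(z:ℂ))*t by push_cast; ring,
      show -(((z:ℝ)*t : ℂ)) * Complex.I = (-(Complex.I*(z:ℂ)))*t by push_cast; ring]
    rw [mul_div_assoc', mul_add, ← Complex.exp_add, ← Complex.exp_add, add_div]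
    push_cast
    ring_nf
  rw [intervalIntegral.integral_congr (g := fun t : ℝ =>
      Complex.exp ((Complex.I*((z-n:ℝ):ℂ)) * t)/2 + Complex.exp ((Complex.I*((-(z+n):ℝ):ℂ)) * t)/2)
      (fun t _ => key t)]
  rw [intervalIntegral.integral_add
      (((by fun_prop : Continuous fun t:ℝ => Complex.exp ((Complex.I*((z-n:ℝ):ℂ)) * t)).intervalIntegrable _ _).div_const 2)
      (((by fun_prop : Continuous fun t:ℝ => Complex.exp ((Complex.I*((-(z+n):ℝ):ℂ)) * t)).intervalIntegrable _ _).div_const 2),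
    intervalIntegral.integral_div, intervalIntegral.integral_div,
    exp_int_helper _ (by push_cast; exact h1),
    exp_int_helper _ (by push_cast; intro hc; apply h2; linear_combination -hc)]
  push_cast
  rw [show (-((z:ℂ)+(n:ℂ)))*(π:ℂ) = -(((z:ℂ)+(n:ℂ))*(π:ℂ)) by ring, Complex.sin_neg, mul_neg, neg_div_neg_eq]
  ring

lemma coeff_eq (z : ℝ) (hz : ∀ k : ℤ, z ≠ k) (n : ℤ) :
    fourierCoeffOn (show (-π:ℝ) < -π + 2*π by linarith [pi_pos]) (fun t => Complex.cos (z*t)) n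
      = ((((-1:ℝ))^n * Real.sin (z*π) * z / (π*(z^2 - (n:ℝ)^2)) : ℝ) : ℂ) := by
  have hzn : z ≠ (n:ℝ) := hz n
  have hzn' : z ≠ -(n:ℝ) := by intro hc; exact hz (-n) (by push_cast; linarith)
  have hπ : (π:ℝ) ≠ 0 := pi_ne_zero
  rw [fourierCoeffOn_eq_integral]
  rw [intervalIntegral.integral_congr (g := fun t : ℝ =>
      Complex.exp (-(n*t)*Complex.I) * Complex.cos (z*t)) (fun t _ => by
    show (fourier (-n) (t : AddCircle (-π + 2*π - -π))) • Complex.cos (z*t) = _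
    rw [fourier_coe_apply]
    rw [smul_eq_mul]
    congr 2
    have : (-π + 2*π - -π : ℝ) = 2*π := by ring
    rw [this]
    push_cast
    field_simp [Complex.ofReal_ne_zero.2 pi_ne_zero])]
  have hπc : (π:ℂ) ≠ 0 := Complex.ofReal_ne_zero.2 pi_ne_zero
  rw [show (-π + 2*π : ℝ) = π by ring]
  rw [cos_integral z n hzn hzn']
  have e1 : ((z:ℂ) - (n:ℂ)) * (π:ℂ) = (((z - n)*π : ℝ) : ℂ) := by push_cast; ring
  have e2 : ((z:ℂ) + (n:ℂ)) * (π:ℂ) = (((z + n)*π : ℝ) : ℂ) := by push_cast; ring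
  rw [e1, e2, ← Complex.ofReal_sin, ← Complex.ofReal_sin]
  have s1 : Real.sin ((z - n)*π) = (-1:ℝ)^n * Real.sin (z*π) := by
    rw [show (z - n)*π = z*π - n*π by ring, Real.sin_sub_int_mul_pi]
  have s2 : Real.sin ((z + n)*π) = (-1:ℝ)^n * Real.sin (z*π) := by
    rw [show (z + n)*π = z*π + n*π by ring, Real.sin_add_int_mul_pi]
  rw [s1, s2]
  have h1 : z - (n:ℝ) ≠ 0 := sub_ne_zero.2 hzn
  have h2 : z + (n:ℝ) ≠ 0 := fun hc => hzn' (by linarith)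
  have h3 : z^2 - (n:ℝ)^2 ≠ 0 := by
    intro hc; rcases mul_eq_zero.1 (show (z-n)*(z+n) = 0 by linear_combination hc) with hh|hh
    exacts [h1 hh, h2 hh]
  rw [Complex.real_smul]
  push_cast
  have c1 : ((z:ℂ) - (n:ℂ)) ≠ 0 := by exact_mod_cast Complex.ofReal_ne_zero.2 h1
  have c2 : ((z:ℂ) + (n:ℂ)) ≠ 0 := by exact_mod_cast Complex.ofReal_ne_zero.2 h2
  have c3 : ((z:ℂ)^2 - (n:ℂ)^2) ≠ 0 := by exact_mod_cast Complex.ofReal_ne_zero.2 h3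
  field_simp [hπc, c1, c2, c3]
  ring

lemma cot_hasSum (z : ℝ) (hz : ∀ k : ℤ, z ≠ k) :
    HasSum (fun n : ℤ => z / (z^2 - (n:ℝ)^2) / π) (Real.cos (z*π) / Real.sin (z*π)) := by
  haveI : Fact (0 < 2*π) := ⟨by positivity⟩
  set e : ℝ → ℂ := fun t => Complex.cos (z*t) with he
  have cont : Continuous (AddCircle.liftIco (2*π) (-π) e) := by
    apply AddCircle.liftIco_continuous
    · show Complex.cos ((z:ℂ)*((-π : ℝ):ℂ)) = Complex.cos ((z:ℂ)*((-π + 2*π : ℝ):ℂ))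
      rw [show ((-π + 2*π : ℝ):ℂ) = (π:ℂ) by push_cast; ring, show ((-π : ℝ):ℂ) = -(π:ℂ) by push_cast; ring]
      rw [mul_neg, Complex.cos_neg]
    · fun_prop
  set F : C(AddCircle (2*π), ℂ) := ⟨_, cont⟩ with hF
  set c : ℤ → ℝ := fun n => (-1:ℝ)^n * Real.sin (z*π) * z / (π*(z^2 - (n:ℝ)^2)) with hc
  have hcoeff : ∀ n : ℤ, fourierCoeff (⇑F) n = ((c n : ℝ) : ℂ) := by
    intro n
    have h0 : fourierCoeff (⇑F) n = fourierCoeff (AddCircle.liftIco (2*π) (-π) e) n := rfl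
    rw [h0, fourierCoeff_liftIco_eq, coeff_eq z hz n, hc]
  -- summability of the real coefficients
  have heven : ∀ n : ℤ, c (-n) = c n := by
    intro n
    simp only [hc]
    rw [show ((-n : ℤ):ℝ) = -(n:ℝ) by push_cast; ring, neg_sq]
    congr 2
    rw [zpow_neg]
    rcases Int.even_or_odd n with he | ho
    · rw [he.neg_one_zpow]; norm_num
    · rw [ho.neg_one_zpow]; norm_num
  have hcnat : Summable (fun n : ℕ => c n) := by
    apply Summable.of_norm_bounded_eventually_nat
      (g := fun n : ℕ => (|Real.sin (z*π) * z|/π * 2) * (1/(n:ℝ)^2))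
      ((summable_one_div_nat_pow.2 one_lt_two).mul_left _)
    filter_upwards [eventually_ge_atTop (⌈2*z^2+2⌉₊)] with n hn
    have h2 : (2*z^2+2 : ℝ) ≤ (n:ℝ) := (Nat.ceil_le.1 hn)
    have h3 : (1:ℝ) ≤ (n:ℝ) := by nlinarith [sq_nonneg z]
    have h4 : 2*z^2+2 ≤ (n:ℝ)^2 := by nlinarith
    have h5 : (0:ℝ) < ((n:ℕ):ℝ)^2 - z^2 := by push_cast; nlinarith
    have habs : ‖c (n:ℤ)‖ = |Real.sin (z*π) * z| / (π*((n:ℝ)^2 - z^2)) := by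
      rw [hc, Real.norm_eq_abs]
      simp only []
      push_cast
      rw [zpow_natCast, abs_div, abs_mul, abs_mul, abs_pow, abs_neg, abs_one, one_pow, one_mul,
        ← abs_mul, abs_mul π, abs_of_pos pi_pos, abs_sub_comm, abs_of_pos (by nlinarith : (0:ℝ) < (n:ℝ)^2 - z^2)]
    rw [habs, div_le_iff₀ (by push_cast at h5 ⊢; positivity)]
    set s := |Real.sin (z*π) * z| with hs
    have hszn : 0 ≤ s := abs_nonneg _
    have hn0 : (n:ℝ) ≠ 0 := by nlinarith
    have hu : (1/(n:ℝ)^2) * (n:ℝ)^2 = 1 := by field_simp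
    have hupos : 0 < (1/(n:ℝ)^2) := by positivity
    have hub : (1/(n:ℝ)^2) * (2*z^2+2) ≤ 1 := by
      calc (1/(n:ℝ)^2) * (2*z^2+2) ≤ (1/(n:ℝ)^2) * (n:ℝ)^2 := by
            apply mul_le_mul_of_nonneg_left h4 (le_of_lt hupos)
        _ = 1 := hu
    have hpi : s / π * π = s := by field_simp
    nlinarith [mul_nonneg hszn (le_of_lt hupos), mul_le_mul_of_nonneg_left hub hszn,
      mul_nonneg (mul_nonneg hszn (le_of_lt hupos)) (sq_nonneg z)]
  have hsum : Summable (fourierCoeff (⇑F)) := by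
    rw [funext hcoeff]
    rw [show (fun n : ℤ => ((c n : ℝ):ℂ)) = (fun x => ((c x : ℝ):ℂ)) from rfl]
    apply Summable.of_nat_of_neg <;>
      [exact (Complex.summable_ofReal.2 hcnat);
       exact (Complex.summable_ofReal.2 (hcnat.congr fun n => (heven n).symm))]
  -- pointwise convergence at -π
  have hpt := has_pointwise_sum_fourier_series_of_summable hsum ((-π : ℝ) : AddCircle (2*π))
  have hFval : F ((-π : ℝ) : AddCircle (2*π)) = Complex.cos ((z:ℂ)*(π:ℂ)) := by
    have hmem : (-π : ℝ) ∈ Set.Ico (-π) (-π + 2*π) := ⟨le_refl _, by linarith [pi_pos]⟩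
    show AddCircle.liftIco (2*π) (-π) e ((-π:ℝ)) = _
    rw [AddCircle.liftIco_coe_apply hmem, he]
    simp only []
    rw [show ((-π : ℝ):ℂ) = -(π:ℂ) by push_cast; ring, mul_neg, Complex.cos_neg]
  have hfour : ∀ n : ℤ, (fourier n ((-π : ℝ) : AddCircle (2*π)) : ℂ) = ((-1:ℝ)^n : ℝ) := by
    intro n
    rw [fourier_coe_apply]
    rw [show 2*(π:ℂ)*Complex.I*(n:ℂ)*((-π:ℝ):ℂ)/((2*π:ℝ):ℂ) = (-n : ℤ)*((π:ℂ)*Complex.I) by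
      push_cast; field_simp [Complex.ofReal_ne_zero.mpr pi_ne_zero]]
    rw [Complex.exp_int_mul, Complex.exp_pi_mul_I]
    rcases Int.even_or_odd n with he | ho
    · rw [Even.neg_one_zpow (by simpa using he.neg), he.neg_one_zpow]; norm_num
    · rw [Odd.neg_one_zpow (by simpa using ho.neg), ho.neg_one_zpow]; norm_num
  simp only [hcoeff, hfour, hFval, smul_eq_mul] at hpt
  have hpt2 : HasSum (fun n : ℤ => ((c n * (-1:ℝ)^n : ℝ) : ℂ)) ((Real.cos (z*π) : ℝ) : ℂ) := by
    convert hpt using 2 with n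
    · push_cast; ring
    · rw [Complex.ofReal_cos, Complex.ofReal_mul]
  rw [Complex.hasSum_ofReal] at hpt2
  have hsin : Real.sin (z*π) ≠ 0 := by
    rw [Real.sin_ne_zero_iff]
    intro k hk
    exact hz k (mul_right_cancel₀ pi_ne_zero hk).symm
  have hd : ∀ n : ℤ, z^2 - (n:ℝ)^2 ≠ 0 := by
    intro n hcon
    rcases mul_eq_zero.1 (show (z-n)*(z+n) = 0 by linear_combination hcon) with hh | hh
    · exact hz n (by linarith [sub_eq_zero.1 hh])
    · exact hz (-n) (by push_cast; linarith)
  have hfinal := hpt2.div_const (Real.sin (z*π))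
  have hfun : (fun n : ℤ => c n * (-1:ℝ)^n / Real.sin (z*π)) = (fun n : ℤ => z / (z^2 - (n:ℝ)^2) / π) := by
    funext n
    have hsq : ((-1:ℝ))^n * ((-1:ℝ))^n = 1 := by
      rw [← zpow_add₀ (by norm_num : (-1:ℝ) ≠ 0), show n + n = 2*n by ring, zpow_mul]
      norm_num
    rw [hc]
    simp only []
    field_simp [hd n]
    linear_combination z * hsq
  rw [hfun] at hfinal
  exact hfinal

/-- For every real `θ` with `θ/π` not an integer, the symmetric partial sums
`∑_{j=-N}^{N} 2/(θ + (2j+1)π)` converge, and their limit is `(cos θ - 1)/sin θ`. -/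
theorem stmt_1 (θ : ℝ) (h : ∀ k : ℤ, θ / π ≠ (k : ℝ)) :
    Tendsto (fun N : ℕ => ∑ j ∈ Finset.Icc (-(N : ℤ)) (N : ℤ),
        2 / (θ + (2 * (j : ℝ) + 1) * π))
      atTop (𝓝 ((Real.cos θ - 1) / Real.sin θ)) := by
  have hπ : (π : ℝ) ≠ 0 := pi_ne_zero
  have hden : ∀ j : ℤ, θ + (2*(j:ℝ)+1)*π ≠ 0 := by
    intro j hc
    apply h (-(2*j+1))
    rw [div_eq_iff hπ]
    push_cast
    linarith
  set z : ℝ := (θ+π)/(2*π) with hzdef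
  have hz : ∀ k : ℤ, z ≠ k := by
    intro k hk
    apply h (2*k - 1)
    rw [div_eq_iff hπ]
    rw [hzdef, div_eq_iff (by positivity : (2*π : ℝ) ≠ 0)] at hk
    push_cast
    linarith
  have hG := cot_hasSum z hz
  have htendF : Tendsto (fun N : ℕ => Finset.Icc (-(N:ℤ)) (N:ℤ)) atTop atTop := by
    apply tendsto_atTop_finset_of_monotone
    · intro a b hab
      apply Finset.Icc_subset_Icc
      · exact_mod_cast neg_le_neg (by exact_mod_cast hab : (a:ℤ) ≤ b)
      · exact_mod_cast hab
    · intro x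
      exact ⟨x.natAbs, Finset.mem_Icc.2 ⟨by simpa using neg_abs_le x, by simpa using le_abs_self x⟩⟩
  have htend : Tendsto (fun N : ℕ => ∑ j ∈ Finset.Icc (-(N:ℤ)) (N:ℤ), z / (z^2 - (j:ℝ)^2) / π)
      atTop (𝓝 (Real.cos (z*π) / Real.sin (z*π))) := hG.comp htendF
  -- identify the partial sums
  have hsums : ∀ N : ℕ, ∑ j ∈ Finset.Icc (-(N:ℤ)) (N:ℤ), 2 / (θ + (2*(j:ℝ)+1)*π)
      = ∑ j ∈ Finset.Icc (-(N:ℤ)) (N:ℤ), z / (z^2 - (j:ℝ)^2) / π := by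
    intro N
    have href : ∑ j ∈ Finset.Icc (-(N:ℤ)) (N:ℤ), 2 / (θ + (2*((-j : ℤ):ℝ)+1)*π)
        = ∑ j ∈ Finset.Icc (-(N:ℤ)) (N:ℤ), 2 / (θ + (2*(j:ℝ)+1)*π) := by
      apply Finset.sum_nbij' (fun j => -j) (fun j => -j)
      · intro a ha; simp only [Finset.mem_Icc] at ha ⊢; omega
      · intro a ha; simp only [Finset.mem_Icc] at ha ⊢; omega
      · intro a _; ring
      · intro a _; ring
      · intro a _; norm_num
    have key : ∀ j : ℤ, z / (z^2 - (j:ℝ)^2) / π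
        = (2 / (θ + (2*(j:ℝ)+1)*π) + 2 / (θ + (2*((-j:ℤ):ℝ)+1)*π)) / 2 := by
      intro j
      have d1 := hden j
      have d2 := hden (-j)
      push_cast at d2 ⊢
      have hz2 : z^2 - (j:ℝ)^2 = ((θ + (2*(j:ℝ)+1)*π) * (θ + (2*(-(j:ℝ))+1)*π)) / (4*π^2) := by
        rw [hzdef]; field_simp; ring
      have hd12 : (θ + (2*(j:ℝ)+1)*π) * (θ + (2*(-(j:ℝ))+1)*π) ≠ 0 := mul_ne_zero d1 d2
      rw [hz2, div_div_eq_mul_div, hzdef, div_add_div _ _ d1 d2, div_div, div_div,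
        div_eq_div_iff (mul_ne_zero hd12 hπ) (mul_ne_zero hd12 two_ne_zero)]
      field_simp
      ring
    symm
    rw [Finset.sum_congr rfl (fun j _ => key j), ← Finset.sum_div, Finset.sum_add_distrib, href]
    ring
  -- identify the limit
  have hsinθ : Real.sin θ ≠ 0 := by
    rw [Real.sin_ne_zero_iff]
    intro k hk
    exact h k (by rw [← hk, mul_div_cancel_right₀ _ hπ])
  have hsinhalf : Real.sin θ = 2 * Real.sin (θ/2) * Real.cos (θ/2) := by
    conv_lhs => rw [show θ = 2*(θ/2) by ring, Real.sin_two_mul]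
  have hcoshalf : Real.cos (θ/2) ≠ 0 := by
    intro hc
    apply hsinθ
    rw [hsinhalf, hc]
    ring
  have hcosθ : Real.cos θ = 1 - 2 * Real.sin (θ/2)^2 := by
    conv_lhs => rw [show θ = 2*(θ/2) by ring, Real.cos_two_mul']
    have := Real.sin_sq_add_cos_sq (θ/2)
    linarith
  have hsinhalfne : Real.sin (θ/2) ≠ 0 := by
    intro hc
    apply hsinθ
    rw [hsinhalf, hc]
    ring
  have hval : Real.cos (z*π) / Real.sin (z*π) = (Real.cos θ - 1) / Real.sin θ := by
    have hzπ : z*π = θ/2 + π/2 := by rw [hzdef]; field_simp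
    rw [hzπ, Real.cos_add_pi_div_two, Real.sin_add_pi_div_two, hsinhalf, hcosθ]
    field_simp [hsinhalfne, hcoshalf]
    ring
  rw [← hval]
  exact (Tendsto.congr (fun N => (hsums N).symm) htend)
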